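/- arXiv:1411.7164 — 6 statements merged into one kernel-verified Lean document; each statement's English description precedes it below -/
import Mathlib

section
/- Let λ be an ordinal and ⟨w_i : i < γ⟩ a (well-ordered) sequence of countable subsets of λ such that every countably infinite subset of λ is contained in some w_i. For a countably infinite v ⊆ λ let i(v) be the least i with v \ w_i finite, and for u ⊆ λ define cl(u) = u ∪ {0} ∪ ⋃{ w_{i(v)} : v a countably infinite subset of u }. Then there is no sequence ⟨u_n : n < ω⟩ of subsets of λ such that for every n, u_{n+1} ⊆ u_n and u_n is not a subset of cl(u_{n+1}). -/
universe u

/-- `idx γ w v` : the least `i < γ` such that `v \ w i` is finite. -/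
noncomputable def idx (γ : Ordinal.{u}) (w : Ordinal.{u} → Set Ordinal.{u})
    (v : Set Ordinal.{u}) : Ordinal.{u} :=
  sInf {i | i < γ ∧ (v \ w i).Finite}

/-- `cl γ w u = u ∪ {0} ∪ ⋃ { w (idx v) : v a countably infinite subset of u }`. -/
noncomputable def cl (γ : Ordinal.{u}) (w : Ordinal.{u} → Set Ordinal.{u})
    (u : Set Ordinal.{u}) : Set Ordinal.{u} :=
  u ∪ {0} ∪ ⋃ v ∈ {v : Set Ordinal.{u} | v ⊆ u ∧ v.Countable ∧ v.Infinite}, w (idx γ w v)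

lemma subset_cl (γ : Ordinal.{u}) (w : Ordinal.{u} → Set Ordinal.{u})
    (u : Set Ordinal.{u}) : u ⊆ cl γ w u :=
  fun a ha => Or.inl (Or.inl ha)

lemma w_idx_subset_cl (γ : Ordinal.{u}) (w : Ordinal.{u} → Set Ordinal.{u})
    {u v : Set Ordinal.{u}} (h1 : v ⊆ u) (h2 : v.Countable) (h3 : v.Infinite) :
    w (idx γ w v) ⊆ cl γ w u := by
  intro a ha
  exact Or.inr (Set.mem_biUnion ⟨h1, h2, h3⟩ ha)

/-- If `⟨w i : i < γ⟩` is a family of countable subsets of `λ` such that every countably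
infinite subset of `λ` is contained in some `w i`, then there is no decreasing sequence
`⟨u n : n < ω⟩` of subsets of `λ` with `u n ⊄ cl (u (n+1))` for all `n`. -/
theorem stmt_2 (lam γ : Ordinal.{u}) (w : Ordinal.{u} → Set Ordinal.{u})
    (hw : ∀ i < γ, w i ⊆ Set.Iio lam ∧ (w i).Countable)
    (hcof : ∀ v : Set Ordinal.{u}, v ⊆ Set.Iio lam → v.Countable → v.Infinite →
      ∃ i < γ, v ⊆ w i) :
    ¬ ∃ u : ℕ → Set Ordinal.{u},
      (∀ n, u n ⊆ Set.Iio lam) ∧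
      (∀ n, u (n + 1) ⊆ u n) ∧
      (∀ n, ¬ u n ⊆ cl γ w (u (n + 1))) := by
  rintro ⟨u, hlam, hdec, hncl⟩
  have hx : ∀ n, ∃ a, a ∈ u n ∧ a ∉ cl γ w (u (n + 1)) := by
    intro n
    have := hncl n
    rw [Set.not_subset] at this
    exact this
  choose x hxu hxn using hx
  have hmono : ∀ {n m : ℕ}, n ≤ m → u m ⊆ u n := by
    intro n m h
    induction h with
    | refl => exact subset_rfl
    | step _ ih => exact ih.trans' (hdec _)
  -- x is "injective above": for n < m, x n ≠ x m
  have hne : ∀ {n m : ℕ}, n < m → x n ≠ x m := by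
    intro n m h heq
    apply hxn n
    rw [heq]
    exact subset_cl γ w _ (hmono h (hxu m))
  -- the tail sets
  set v : ℕ → Set Ordinal.{u} := fun n => x '' Set.Ici n with hv
  have hvsub : ∀ n, v n ⊆ u n := by
    rintro n _ ⟨k, hk, rfl⟩
    exact hmono hk (hxu k)
  have hvc : ∀ n, (v n).Countable := fun n => ((Set.to_countable _).image x)
  have hvi : ∀ n, (v n).Infinite := by
    intro n
    refine (Set.Ici_infinite n).image ?_
    intro a _ b _ hab
    rcases lt_trichotomy a b with h | h | h
    · exact absurd hab (hne h)
    · exact h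
    · exact absurd hab.symm (hne h)
  have hvm : ∀ n, v (n + 1) ⊆ v n :=
    fun n => Set.image_mono (f := x) (Set.Ici_subset_Ici.2 (Nat.le_succ n))
  -- properties of idx
  have hidxmem : ∀ n, idx γ w (v n) ∈ {i | i < γ ∧ (v n \ w i).Finite} := by
    intro n
    apply csInf_mem
    obtain ⟨i, hi, hsub⟩ := hcof (v n) ((hvsub n).trans (hlam n)) (hvc n) (hvi n)
    exact ⟨i, hi, by rw [Set.diff_eq_empty.2 hsub]; exact Set.finite_empty⟩
  have hanti : ∀ n, idx γ w (v (n + 1)) ≤ idx γ w (v n) := by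
    intro n
    apply csInf_le_csInf (OrderBot.bddBelow _) ⟨_, hidxmem n⟩
    rintro i ⟨hi, hfin⟩
    exact ⟨hi, hfin.subset (Set.diff_subset_diff_left (hvm n))⟩
  have hanti' : ∀ {n m : ℕ}, n ≤ m → idx γ w (v m) ≤ idx γ w (v n) := by
    intro n m h
    induction h with
    | refl => exact le_rfl
    | step _ ih => exact (hanti _).trans ih
  -- the sequence of indices attains its minimum
  obtain ⟨N, hN⟩ : ∃ N, ∀ n, idx γ w (v N) ≤ idx γ w (v n) := by
    obtain ⟨N, hNeq⟩ := csInf_mem (Set.range_nonempty fun n => idx γ w (v n))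
    exact ⟨N, fun n => hNeq.trans_le (csInf_le (OrderBot.bddBelow _) ⟨n, rfl⟩)⟩
  -- cofinitely many x k are in w (idx (v N)); pick one with k ≥ N
  have : (v N \ (v N \ w (idx γ w (v N)))).Nonempty :=
    ((hvi N).diff (hidxmem N).2).nonempty
  obtain ⟨a, hav, hanw⟩ := this
  obtain ⟨k, hkN, rfl⟩ := hav
  have haw : x k ∈ w (idx γ w (v N)) := by
    by_contra h
    exact hanw ⟨⟨k, hkN, rfl⟩, h⟩
  -- idx (v (k+1)) = idx (v N)
  have hkey : idx γ w (v (k + 1)) = idx γ w (v N) :=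
    le_antisymm (hanti' (hkN.trans (Nat.le_succ k))) (hN (k + 1))
  apply hxn k
  apply w_idx_subset_cl γ w (hvsub (k+1)) (hvc _) (hvi _)
  rw [hkey]
  exact haw
end

section
/- Let D be a σ-complete (ℵ1-complete) filter on a set Y, let ⟨f_α : α < δ⟩ be a sequence of functions Y → Ord, and let f : Y → Ord be a ≤_D-upper bound of the sequence such that no g : Y → Ord with g <_D f is also a ≤_D-upper bound. Define J[f, f̄, D] = { A ⊆ Y : A is D-null, or A is D-positive and there exists g : Y → Ord which is a ≤_{D+A}-upper bound of the sequence with g <_{D+A} f }. Then J[f, f̄, D] is a σ-complete ideal on Y disjoint from D. -/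
universe u

open Filter

/-- The ideal `J[f, f̄, D]` : sets `A ⊆ Y` that are `D`-null, or `D`-positive such that
the sequence `f̄` has a `≤_{D+A}`-upper bound `g` with `g <_{D+A} fub`. -/
def Jideal (Y : Type u) (D : Filter Y) (δ : Ordinal.{u})
    (f : Ordinal.{u} → Y → Ordinal.{u}) (fub : Y → Ordinal.{u}) : Set (Set Y) :=
  {A | Aᶜ ∈ D ∨ (Aᶜ ∉ D ∧ ∃ g : Y → Ordinal.{u},
    (∀ α < δ, {s | f α s ≤ g s} ∈ D ⊓ 𝓟 A) ∧ {s | g s < fub s} ∈ D ⊓ 𝓟 A)}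

lemma mem_inf_mono {Y : Type u} {D : Filter Y} {A B X : Set Y} (hBA : B ⊆ A)
    (hX : X ∈ D ⊓ 𝓟 A) : X ∈ D ⊓ 𝓟 B := by
  rw [Filter.mem_inf_principal] at hX ⊢
  exact Filter.mem_of_superset hX (fun x hx hxB => hx (hBA hxB))

/-- If `D` is a proper σ-complete filter on `Y`, `⟨f α : α < δ⟩` a sequence of ordinal
valued functions, and `fub` a `≤_D`-upper bound such that no upper bound is strictly
`<_D`-below it, then `J[fub, f̄, D]` is a σ-complete ideal on `Y` disjoint from `D`. -/
theorem stmt_6 (Y : Type u) (D : Filter Y) [CountableInterFilter D] [D.NeBot]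
    (δ : Ordinal.{u}) (f : Ordinal.{u} → Y → Ordinal.{u}) (fub : Y → Ordinal.{u})
    (hub : ∀ α < δ, {s | f α s ≤ fub s} ∈ D)
    (hmin : ¬ ∃ g : Y → Ordinal.{u},
      (∀ α < δ, {s | f α s ≤ g s} ∈ D) ∧ {s | g s < fub s} ∈ D) :
    (∀ A ∈ Jideal Y D δ f fub, ∀ B ⊆ A, B ∈ Jideal Y D δ f fub) ∧
    (∀ A : ℕ → Set Y, (∀ n, A n ∈ Jideal Y D δ f fub) →
      (⋃ n, A n) ∈ Jideal Y D δ f fub) ∧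
    (∀ A ∈ Jideal Y D δ f fub, A ∉ D) := by
  classical
  refine ⟨?_, ?_, ?_⟩
  · -- downward closed
    intro A hA B hBA
    by_cases hB : Bᶜ ∈ D
    · exact Or.inl hB
    have hApos : Aᶜ ∉ D := fun h =>
      hB (Filter.mem_of_superset h (Set.compl_subset_compl.2 hBA))
    obtain ⟨g, h1, h2⟩ := (hA.resolve_left hApos).2
    exact Or.inr ⟨hB, g, fun α hα => mem_inf_mono hBA (h1 α hα), mem_inf_mono hBA h2⟩
  · -- countable unions
    intro A hA
    by_cases hU : (⋃ n, A n)ᶜ ∈ D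
    · exact Or.inl hU
    refine Or.inr ⟨hU, ?_⟩
    set N : Set ℕ := {n | (A n)ᶜ ∈ D} with hN
    have hwit : ∀ n, ∃ gn : Y → Ordinal.{u}, n ∉ N →
        (∀ α < δ, {s | f α s ≤ gn s} ∈ D ⊓ 𝓟 (A n)) ∧
        {s | gn s < fub s} ∈ D ⊓ 𝓟 (A n) := by
      intro n
      by_cases hn : n ∈ N
      · exact ⟨fun _ => 0, fun h => absurd hn h⟩
      · obtain ⟨gn, h1, h2⟩ := ((hA n).resolve_left hn).2
        exact ⟨gn, fun _ => ⟨h1, h2⟩⟩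
    choose g hg using hwit
    -- C : intersect complements of null sets
    have hC : (⋂ n, if n ∈ N then (A n)ᶜ else Set.univ) ∈ D := by
      refine countable_iInter_mem.2 (fun n => ?_)
      by_cases hn : n ∈ N
      · rw [if_pos hn]; exact hn
      · simp [hn]
    -- the glued function
    set G : Y → Ordinal.{u} := fun s =>
      if h : ∃ n, n ∉ N ∧ s ∈ A n then g (Nat.find h) s else 0 with hG
    have hex : ∀ x, x ∈ (⋂ n, if n ∈ N then (A n)ᶜ else Set.univ) →
        x ∈ (⋃ n, A n) → ∃ n, n ∉ N ∧ x ∈ A n := by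
      intro x hxC hxU
      obtain ⟨m, hm⟩ := Set.mem_iUnion.1 hxU
      refine ⟨m, fun hmN => ?_, hm⟩
      have := Set.mem_iInter.1 hxC m
      rw [if_pos hmN] at this
      exact this hm
    refine ⟨G, ?_, ?_⟩
    · intro α hα
      rw [Filter.mem_inf_principal]
      have hT : (⋂ n, if hn : n ∈ N then Set.univ
          else {x | x ∈ A n → f α x ≤ g n x}) ∈ D := by
        refine countable_iInter_mem.2 (fun n => ?_)
        by_cases hn : n ∈ N
        · simp [hn]
        · rw [dif_neg hn]
          exact Filter.mem_inf_principal.1 ((hg n hn).1 α hα)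
      refine Filter.mem_of_superset (Filter.inter_mem hT hC) ?_
      rintro x ⟨hxT, hxC⟩ hxU
      have h : ∃ n, n ∉ N ∧ x ∈ A n := hex x hxC hxU
      have hk := Nat.find_spec h
      have hxk := Set.mem_iInter.1 hxT (Nat.find h)
      rw [dif_neg hk.1] at hxk
      have : f α x ≤ g (Nat.find h) x := hxk hk.2
      simpa [hG, dif_pos h] using this
    · rw [Filter.mem_inf_principal]
      have hS : (⋂ n, if hn : n ∈ N then Set.univ
          else {x | x ∈ A n → g n x < fub x}) ∈ D := by
        refine countable_iInter_mem.2 (fun n => ?_)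
        by_cases hn : n ∈ N
        · simp [hn]
        · rw [dif_neg hn]
          exact Filter.mem_inf_principal.1 (hg n hn).2
      refine Filter.mem_of_superset (Filter.inter_mem hS hC) ?_
      rintro x ⟨hxS, hxC⟩ hxU
      have h : ∃ n, n ∉ N ∧ x ∈ A n := hex x hxC hxU
      have hk := Nat.find_spec h
      have hxk := Set.mem_iInter.1 hxS (Nat.find h)
      rw [dif_neg hk.1] at hxk
      have : g (Nat.find h) x < fub x := hxk hk.2
      simpa [hG, dif_pos h] using this
  · -- disjoint from D
    intro A hA hAD
    rcases hA with hA | ⟨_, g, h1, h2⟩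
    · exact Filter.empty_notMem D (by
        simpa [Set.inter_compl_self] using Filter.inter_mem hAD hA)
    · refine hmin ⟨g, fun α hα => ?_, ?_⟩
      · have := Filter.mem_inf_principal.1 (h1 α hα)
        exact Filter.mem_of_superset (Filter.inter_mem this hAD)
          (fun x ⟨hx1, hx2⟩ => hx1 hx2)
      · have := Filter.mem_inf_principal.1 h2
        exact Filter.mem_of_superset (Filter.inter_mem this hAD)
          (fun x ⟨hx1, hx2⟩ => hx1 hx2)
end

section
/- Let ⟨δ_s : s ∈ Y⟩ be a family of limit ordinals, θ an infinite cardinal, and D a filter on Y whose dual ideal contains cf-id_{<θ}(δ̄). Suppose ⟨f_α : α < α*⟩ is a <_D-increasing sequence of members of Π_{s∈Y} δ_s that has no <_D-upper bound in Π_{s∈Y} δ_s. Then cf(α*) ≥ θ. -/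
universe u

open Cardinal

/-- The order type of a set of ordinals. -/
noncomputable def otp (s : Set Ordinal.{u}) : Ordinal.{u + 1} :=
  Ordinal.type (α := ↥s) (· < ·)

/-- `cfId Y δ θ` : the collection of `X ⊆ Y` for which there is a family
`⟨u s : s ∈ X⟩` with `u s ⊆ δ s` cofinal in `δ s` of order type `< θ`. -/
def cfId (Y : Type u) (δ : Y → Ordinal.{u}) (θ : Cardinal.{u}) : Set (Set Y) :=
  {X | ∃ u : Y → Set Ordinal.{u}, ∀ s ∈ X,
    u s ⊆ Set.Iio (δ s) ∧ (∀ β < δ s, ∃ γ ∈ u s, β ≤ γ) ∧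
      otp (u s) < Ordinal.lift.{u + 1} θ.ord}

/-- If the dual ideal of `D` contains `cf-id_{<θ}(δ̄)` and `⟨f α : α < α*⟩` is a
`<_D`-increasing sequence in `Π δ̄` with no `<_D`-upper bound in `Π δ̄`, then
`cf(α*) ≥ θ`. -/
theorem stmt_9 (Y : Type u) (δ : Y → Ordinal.{u}) (hδ : ∀ s, Order.IsSuccLimit (δ s))
    (θ : Cardinal.{u}) (hθ : ℵ₀ ≤ θ) (D : Filter Y)
    (hD : ∀ X ∈ cfId Y δ θ, Xᶜ ∈ D)
    (αstar : Ordinal.{u}) (f : Ordinal.{u} → Y → Ordinal.{u})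
    (hmem : ∀ α < αstar, ∀ s, f α s < δ s)
    (hinc : ∀ α β : Ordinal.{u}, α < β → β < αstar → {s | f α s < f β s} ∈ D)
    (hnub : ¬ ∃ g : Y → Ordinal.{u}, (∀ s, g s < δ s) ∧
      ∀ α < αstar, {s | f α s < g s} ∈ D) :
    θ ≤ Ordinal.cof αstar := by
  by_contra hcon
  push_neg at hcon
  rcases Ordinal.zero_or_succ_or_isSuccLimit αstar with h0 | ⟨β, hβ⟩ | hlim
  · -- α* = 0 : the constant 0 function is an upper bound
    exact hnub ⟨fun _ => 0, fun s => (hδ s).pos, fun α hα => by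
      subst h0; exact absurd hα (not_lt_of_ge (zero_le (a := α)))⟩
  · -- α* = β + 1 : f β + 1 is an upper bound
    subst hβ
    refine hnub ⟨fun s => f β s + 1, fun s =>
      (hδ s).succ_lt (hmem β (Order.lt_succ β) s), fun α hα => ?_⟩
    have hsucc : ∀ γ : Ordinal.{u}, γ < γ + 1 := fun γ => by
      rw [Ordinal.add_one_eq_succ]; exact Order.lt_succ γ
    rcases lt_or_eq_of_le (Order.lt_succ_iff.mp hα) with h | h
    · exact Filter.mem_of_superset (hinc α β h (Order.lt_succ β))
        (fun s hs => lt_trans hs (hsucc _))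
    · subst h
      exact Filter.univ_mem' (fun s => hsucc _)
  · -- α* limit
    obtain ⟨ι, F, hlsub, hcard⟩ := Ordinal.exists_lsub_cof αstar
    have hF : ∀ i, F i < αstar := fun i => hlsub ▸ Ordinal.lt_lsub F i
    set u : Y → Set Ordinal.{u} := fun s => Set.range (fun i => f (F i) s) with hu
    set X : Set Y := {s | ∀ β < δ s, ∃ γ ∈ u s, β ≤ γ} with hX
    have hXc : Xᶜ ∈ D := by
      refine hD X ⟨u, fun s hs => ⟨?_, hs, ?_⟩⟩
      · rintro γ ⟨i, rfl⟩
        exact hmem (F i) (hF i) s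
      · -- order type bound
        rw [Cardinal.lift_ord, Cardinal.lt_ord]
        have h1 : (otp (u s)).card = #(u s) := Ordinal.card_type _
        rw [h1]
        have h2 := Cardinal.mk_range_le_lift (f := fun i => f (F i) s)
        rw [Cardinal.lift_id'.{u, u+1}] at h2
        calc #(u s) ≤ Cardinal.lift.{u+1} #ι := h2
          _ = Cardinal.lift.{u+1} (Ordinal.cof αstar) := by rw [hcard]
          _ < Cardinal.lift.{u+1} θ := Cardinal.lift_lt.mpr hcon
    -- construct the upper bound
    have hg : ∀ s ∉ X, ∃ β, β < δ s ∧ ∀ γ ∈ u s, γ < β := by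
      intro s hs
      simp only [hX, Set.mem_setOf_eq, not_forall] at hs
      obtain ⟨β, hβ1, hβ2⟩ := hs
      push_neg at hβ2
      exact ⟨β, hβ1, hβ2⟩
    classical
    set g : Y → Ordinal.{u} := fun s =>
      if h : ∃ β, β < δ s ∧ ∀ γ ∈ u s, γ < β then h.choose else 0 with hgdef
    refine hnub ⟨g, fun s => ?_, fun α hα => ?_⟩
    · by_cases h : ∃ β, β < δ s ∧ ∀ γ ∈ u s, γ < β
      · simp only [hgdef, dif_pos h]; exact h.choose_spec.1
      · simp only [hgdef, dif_neg h]; exact (hδ s).pos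
    · -- find i with α < F i
      have h1 : α + 1 < αstar := hlim.succ_lt hα
      have h2 : ¬ Ordinal.lsub F ≤ α + 1 := by rw [hlsub]; exact not_le.mpr h1
      rw [Ordinal.lsub_le_iff] at h2
      push_neg at h2
      obtain ⟨i, hi⟩ := h2
      have hαFi : α < F i := lt_of_lt_of_le (Order.lt_succ α) (by simpa using hi)
      refine Filter.mem_of_superset (Filter.inter_mem hXc (hinc α (F i) hαFi (hF i)))
        (fun s hs => ?_)
      obtain ⟨hs1, hs2⟩ := hs
      have h := hg s hs1
      have : g s = h.choose := by simp only [hgdef, dif_pos h]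
      rw [Set.mem_setOf_eq, this]
      exact lt_trans hs2 (h.choose_spec.2 (f (F i) s) ⟨i, rfl⟩)
end

section
/- (ZF) Fix a nonempty set Y and a natural number k ≥ 1. Define by recursion X_0 = Y and, for 0 < m < k, X_m = the set of all functions from Π_{ℓ<m} (^ω X_ℓ) to Y. Let Λ = Π_{m<k} (^ω X_m), and for m < k, n < ω and η̄ = ⟨η_ℓ : ℓ<k⟩ ∈ Λ let η̄↾(m,n) be the tuple obtained by replacing η_m with its restriction η_m↾n. Let Ω = { η̄↾(m,n) : η̄ ∈ Λ, m < k, n < ω }. Then there exist (explicitly definable, without choice) functions h_{m,n} : Λ → Y for m < k, n < ω such that: for every function g : Ω → Y there exists η̄ ∈ Λ with h_{m,n}(η̄) = g(η̄↾(m,n)) for all m < k and n < ω. -/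
universe u

/-- `BBP Y m` is the product `Π_{ℓ<m} (^ω X_ℓ)` where `X_0 = Y` and
`X_{ℓ+1} = (Π_{j<ℓ+1} (^ω X_j)) → Y`, coded as nested pairs. -/
def BBP (Y : Type u) : ℕ → Type u
  | 0 => PUnit
  | 1 => PUnit × (ℕ → Y)
  | (m + 2) => BBP Y (m + 1) × (ℕ → (BBP Y (m + 1) → Y))

/-- `BBX Y m` is the set `X_m` : `X_0 = Y` and for `m > 0`,
`X_m` is the set of functions from `Π_{ℓ<m} (^ω X_ℓ)` to `Y`. -/
def BBX (Y : Type u) : ℕ → Type u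
  | 0 => Y
  | (m + 1) => BBP Y (m + 1) → Y

noncomputable def bbDefault (Y : Type u) [Nonempty Y] : (m : ℕ) → BBX Y m
  | 0 => Classical.arbitrary Y
  | (_ + 1) => fun _ => Classical.arbitrary Y

def bbPack {Y : Type u} {k : ℕ} (η : ∀ m : Fin k, ℕ → BBX Y m.val) :
    (m : ℕ) → m ≤ k → BBP Y m
  | 0, _ => PUnit.unit
  | 1, h => (PUnit.unit, η ⟨0, h⟩)
  | (m + 2), h => (bbPack η (m + 1) (by omega), η ⟨m + 1, by omega⟩)

def bbUnpack {Y : Type u} : (m : ℕ) → BBP Y m → (ℓ : ℕ) → ℓ < m → ℕ → BBX Y ℓ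
  | 1, p, 0, _ => p.2
  | (m + 2), p, ℓ, hℓ =>
    if he : ℓ = m + 1 then
      he.symm ▸ (p.2 : ℕ → BBX Y (m + 1))
    else bbUnpack (m + 1) p.1 ℓ (by omega)

theorem bbUnpack_bbPack {Y : Type u} {k : ℕ} (η : ∀ m : Fin k, ℕ → BBX Y m.val) :
    ∀ (m : ℕ) (hm : m ≤ k) (ℓ : ℕ) (hℓ : ℓ < m),
      bbUnpack m (bbPack η m hm) ℓ hℓ = η ⟨ℓ, by omega⟩
  | 1, hm, 0, _ => rfl
  | (m + 2), hm, ℓ, hℓ => by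
    unfold bbUnpack
    by_cases he : ℓ = m + 1
    · subst he
      simp [bbPack]
    · simp only [dif_neg he]
      exact bbUnpack_bbPack η (m + 1) (by omega) ℓ (by omega)

def bbLam {Y : Type u} {k : ℕ} (f : (ℓ : ℕ) → ℓ < k → ℕ → BBX Y ℓ) :
    ∀ m : Fin k, ℕ → BBX Y m.val :=
  fun m => f m.val m.isLt

noncomputable def bbTau (Y : Type u) [Nonempty Y] (k : ℕ)
    (g : (∀ m : Fin k, ℕ → BBX Y m.val) → Fin k → ℕ → Y) :
    (m : ℕ) → (hm : m < k) → (n : ℕ) → BBX Y m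
  | 0, hm, n =>
    (g (bbLam fun ℓ hℓ =>
        match ℓ with
        | 0 => fun j => if _ : j < n then bbTau Y k g 0 hm j else bbDefault Y 0
        | (i + 1) => fun j => bbTau Y k g (i + 1) hℓ j) ⟨0, hm⟩ n : Y)
  | (i + 1), hm, n =>
    show BBP Y (i + 1) → Y from fun p =>
      g (bbLam fun ℓ hℓ j =>
        if hl : ℓ < i + 1 then bbUnpack (i + 1) p ℓ hl j
        else if he : ℓ = i + 1 then
          he.symm ▸ (if _ : j < n then bbTau Y k g (i + 1) hm j else bbDefault Y (i + 1))
        else bbTau Y k g ℓ hℓ j) ⟨i + 1, hm⟩ n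
termination_by m _ n => (k - m, n)
decreasing_by
  all_goals (simp_wf
             first | exact Prod.Lex.right _ (by omega)
                   | exact Prod.Lex.left _ _ (by omega))

def bbH {Y : Type u} {k : ℕ} : (m : ℕ) → (hm : m < k) → ℕ →
    (∀ m : Fin k, ℕ → BBX Y m.val) → Y
  | 0, hm, n, η => η ⟨0, hm⟩ n
  | (i + 1), hm, n, η => (η ⟨i + 1, hm⟩ n : BBP Y (i + 1) → Y) (bbPack η (i + 1) hm.le)

/-- (ZF) The black box: with `X_m` as above and `Λ = Π_{m<k} (^ω X_m)`, there are
functions `h m n : Λ → Y` such that for every `g` assigning to each restricted tuple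
`η̄ ↾ (m,n)` a member of `Y` (coded as a function on `Λ × k × ω` depending only on the
restriction `η̄ ↾ (m,n)`), some `η̄ ∈ Λ` satisfies `h m n η̄ = g (η̄ ↾ (m,n))` for all
`m < k`, `n < ω`. -/
theorem stmt_13 (Y : Type u) [Nonempty Y] (k : ℕ) (hk : 1 ≤ k) :
    ∃ h : Fin k → ℕ → (∀ m : Fin k, ℕ → BBX Y m.val) → Y,
      ∀ g : (∀ m : Fin k, ℕ → BBX Y m.val) → Fin k → ℕ → Y,
        (∀ η ν : (∀ m : Fin k, ℕ → BBX Y m.val), ∀ m : Fin k, ∀ n : ℕ,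
          (∀ ℓ : Fin k, ℓ ≠ m → η ℓ = ν ℓ) → (∀ j < n, η m j = ν m j) →
            g η m n = g ν m n) →
        ∃ η : (∀ m : Fin k, ℕ → BBX Y m.val), ∀ (m : Fin k) (n : ℕ),
          h m n η = g η m n := by
  refine ⟨fun m n η => bbH m.val m.isLt n η, ?_⟩
  intro g hg
  refine ⟨bbLam (bbTau Y k g), ?_⟩
  rintro ⟨mv, hm⟩ n
  cases mv with
  | zero =>
    show (bbTau Y k g 0 hm n : Y) = g (bbLam (bbTau Y k g)) ⟨0, hm⟩ n
    rw [bbTau]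
    refine hg _ _ _ _ ?_ ?_
    · rintro ⟨lv, hl⟩ hne
      cases lv with
      | zero => exact absurd rfl hne
      | succ i => rfl
    · intro j hj
      show (if _ : j < n then bbTau Y k g 0 hm j else bbDefault Y 0)
          = bbTau Y k g 0 hm j
      rw [dif_pos hj]
  | succ i =>
    show (bbTau Y k g (i + 1) hm n : BBP Y (i + 1) → Y)
        (bbPack (bbLam (bbTau Y k g)) (i + 1) hm.le)
        = g (bbLam (bbTau Y k g)) ⟨i + 1, hm⟩ n
    rw [bbTau]
    refine hg _ _ _ _ ?_ ?_
    · rintro ⟨lv, hl⟩ hne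
      by_cases hc : lv < i + 1
      · funext j
        show (if hl' : lv < i + 1 then
                bbUnpack (i + 1) (bbPack (bbLam (bbTau Y k g)) (i + 1) hm.le) lv hl' j
              else if he' : lv = i + 1 then
                he'.symm ▸ (if _ : j < n then bbTau Y k g (i + 1) hm j
                  else bbDefault Y (i + 1))
              else bbTau Y k g lv hl j)
            = bbLam (bbTau Y k g) ⟨lv, hl⟩ j
        rw [dif_pos hc, bbUnpack_bbPack (bbLam (bbTau Y k g)) (i + 1) hm.le lv hc]
      · by_cases he : lv = i + 1
        · exact absurd (Fin.ext he) hne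
        · funext j
          show (if hl' : lv < i + 1 then
                  bbUnpack (i + 1) (bbPack (bbLam (bbTau Y k g)) (i + 1) hm.le) lv hl' j
                else if he' : lv = i + 1 then
                  he'.symm ▸ (if _ : j < n then bbTau Y k g (i + 1) hm j
                    else bbDefault Y (i + 1))
                else bbTau Y k g lv hl j)
              = bbLam (bbTau Y k g) ⟨lv, hl⟩ j
          rw [dif_neg hc, dif_neg he]
          rfl
    · intro j hj
      show (if hl' : i + 1 < i + 1 then
              bbUnpack (i + 1) (bbPack (bbLam (bbTau Y k g)) (i + 1) hm.le) (i + 1) hl' j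
            else if he' : (i + 1 : ℕ) = i + 1 then
              he'.symm ▸ (if _ : j < n then bbTau Y k g (i + 1) hm j
                else bbDefault Y (i + 1))
            else bbTau Y k g (i + 1) hm j)
          = bbLam (bbTau Y k g) ⟨i + 1, hm⟩ j
      rw [dif_neg (lt_irrefl (i + 1)), dif_pos rfl]
      show (if _ : j < n then bbTau Y k g (i + 1) hm j else bbDefault Y (i + 1))
          = bbTau Y k g (i + 1) hm j
      rw [dif_pos hj]
end

section
/- For every nonzero integer a and every sequence ⟨a_n : n < ω⟩ of integers, there exists a sequence ⟨b_n : n < ω⟩ of integers such that there is NO sequence ⟨t_n : n < ω⟩ of integers satisfying n!·t_{n+1} = t_n − a_{n+1} − b_n·a for every n < ω. -/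
/-- `Pf n = ∏_{k<n} k!`. -/
private def Pf : ℕ → ℤ
  | 0 => 1
  | n+1 => Pf n * (Nat.factorial n : ℤ)

private lemma Pf_pos : ∀ n, 0 < Pf n
  | 0 => one_pos
  | n+1 => mul_pos (Pf_pos n) (by exact_mod_cast Nat.factorial_pos n)

/-- Partial sums `S n = ∑_{k<n} P k * (aseq (k+1) + b k * a)` with the `b` chosen
diagonally to avoid the enumerated candidate `e (k - N)`. -/
private def Sf (a : ℤ) (aseq e : ℕ → ℤ) (N : ℕ) : ℕ → ℤ
  | 0 => 0
  | n+1 =>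
      let S := Sf a aseq e N n
      let b : ℤ := if N ≤ n ∧ Pf (n+1) ∣ (e (n - N) - S - Pf n * aseq (n+1)) then 1 else 0
      S + Pf n * (aseq (n+1) + b * a)

private def bf (a : ℤ) (aseq e : ℕ → ℤ) (N : ℕ) (n : ℕ) : ℤ :=
  if N ≤ n ∧ Pf (n+1) ∣ (e (n - N) - Sf a aseq e N n - Pf n * aseq (n+1)) then 1 else 0

private lemma Sf_succ (a : ℤ) (aseq e : ℕ → ℤ) (N n : ℕ) :
    Sf a aseq e N (n+1) = Sf a aseq e N n + Pf n * (aseq (n+1) + bf a aseq e N n * a) := by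
  rfl

/-- For every nonzero integer `a` and every sequence `⟨a n : n < ω⟩` of integers there
is a sequence `⟨b n : n < ω⟩` of integers such that no sequence `⟨t n : n < ω⟩` of
integers satisfies `n! * t (n+1) = t n − a (n+1) − b n * a` for every `n`. -/
theorem stmt_15 (a : ℤ) (ha : a ≠ 0) (aseq : ℕ → ℤ) :
    ∃ b : ℕ → ℤ, ¬ ∃ t : ℕ → ℤ,
      ∀ n : ℕ, (n.factorial : ℤ) * t (n + 1) = t n - aseq (n + 1) - b n * a := by
  set e : ℕ → ℤ := fun n => Equiv.intEquivNat.symm n with he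
  set N : ℕ := a.natAbs + 1 with hN
  refine ⟨bf a aseq e N, ?_⟩
  rintro ⟨t, ht⟩
  -- key expansion: t 0 = Pf n * t n + Sf n
  have hexp : ∀ n, t 0 = Pf n * t n + Sf a aseq e N n := by
    intro n
    induction n with
    | zero => simp [Pf, Sf]
    | succ n ih =>
        have h := ht n
        have htn : t n = (Nat.factorial n : ℤ) * t (n+1) + aseq (n+1) + bf a aseq e N n * a := by
          linarith [h]
        rw [ih, htn, Sf_succ]
        show _ = Pf n * (Nat.factorial n : ℤ) * t (n+1) + _
        ring
  -- avoidance lemma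
  have havoid : ∀ n, N ≤ n → ¬ Pf (n+1) ∣ (e (n - N) - Sf a aseq e N (n+1)) := by
    intro n hn hdvd
    have hfac : ¬ ((Nat.factorial n : ℤ) ∣ a) := by
      intro hd
      have h1 : (n.factorial : ℤ) ≤ |a| := Int.le_of_dvd (abs_pos.mpr ha) ((dvd_abs _ _).mpr hd)
      have h2 : (n : ℤ) ≤ (n.factorial : ℤ) := by exact_mod_cast Nat.self_le_factorial n
      rw [Int.abs_eq_natAbs] at h1
      omega
    rw [Sf_succ] at hdvd
    set c : ℤ := e (n - N) - Sf a aseq e N n - Pf n * aseq (n+1) with hc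
    have hre : e (n - N) - (Sf a aseq e N n + Pf n * (aseq (n+1) + bf a aseq e N n * a))
        = c - bf a aseq e N n * (Pf n * a) := by rw [hc]; ring
    rw [hre] at hdvd
    by_cases hcase : N ≤ n ∧ Pf (n+1) ∣ c
    · have hb : bf a aseq e N n = 1 := by rw [bf, if_pos hcase]
      rw [hb, one_mul] at hdvd
      have h2 : Pf (n+1) ∣ Pf n * a := by simpa using hcase.2.sub hdvd
      have : Pf n * (Nat.factorial n : ℤ) ∣ Pf n * a := by simpa [Pf] using h2
      exact hfac ((mul_dvd_mul_iff_left (ne_of_gt (Pf_pos n))).mp this)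
    · have hb : bf a aseq e N n = 0 := by rw [bf, if_neg hcase]
      rw [hb, zero_mul, sub_zero] at hdvd
      exact hcase ⟨hn, hdvd⟩
  -- get m with e m = t 0
  obtain ⟨m, hm⟩ : ∃ m, e m = t 0 := ⟨Equiv.intEquivNat (t 0), by simp [he]⟩
  have hn : N ≤ m + N := le_add_self
  apply havoid (m + N) hn
  have : (m + N) - N = m := by omega
  rw [this, hm, hexp (m + N + 1)]
  simp [dvd_add, Dvd.intro]
end

section
/- Let Y be a set, ⟨δ_s : s ∈ Y⟩ limit ordinals, D* a σ-complete filter on Y, and θ a cardinal such that: cf-id_{<θ}(δ̄) is contained in the dual ideal of D*, and hrtg(P(Y)) ≤ θ. Suppose further that for every D-positive set and every relevant σ-complete extension D of D*, exact upper bounds as in the eub-existence claim are available, and that (Π δ̄, <_{D*}) has a well-orderable cofinal subset F. Then there is a <_{D*}-increasing sequence ⟨f_α : α < α*⟩ in Π δ̄ with no <_{D*}-upper bound in Π δ̄, obtained by recursively taking least upper bounds from F; moreover cf(α*) ≥ θ. -/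
universe u

open Cardinal Filter

/-- `hrtg A` : the least ordinal `o` such that there is no surjection from `A` onto `o`. -/
noncomputable def hrtg (A : Type u) : Ordinal.{u} :=
  sInf {o : Ordinal.{u} | ¬ ∃ f : A → o.ToType, Function.Surjective f}

open Classical in
/-- The recursively constructed sequence: at each stage pick (via choice) a strict
upper bound in `Π δ̄` of the previous stages if one exists. -/
noncomputable def seqF (Y : Type u) (δ : Y → Ordinal.{u}) (Dstar : Filter Y) :
    Ordinal.{u} → Y → Ordinal.{u} :=
  Ordinal.lt_wf.fix fun α ih =>
    if h : ∃ g : Y → Ordinal.{u}, (∀ s, g s < δ s) ∧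
        ∀ β : Ordinal.{u}, ∀ hβ : β < α, {s | ih β hβ s < g s} ∈ Dstar
    then h.choose else fun _ => 0

/-- `Good α` : the previous stages admit a strict upper bound in `Π δ̄`. -/
def Good (Y : Type u) (δ : Y → Ordinal.{u}) (Dstar : Filter Y) (α : Ordinal.{u}) : Prop :=
  ∃ g : Y → Ordinal.{u}, (∀ s, g s < δ s) ∧
    ∀ β : Ordinal.{u}, ∀ _ : β < α, {s | seqF Y δ Dstar β s < g s} ∈ Dstar

open Classical in
theorem seqF_eq (Y : Type u) (δ : Y → Ordinal.{u}) (Dstar : Filter Y) (α : Ordinal.{u}) :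
    seqF Y δ Dstar α = if h : Good Y δ Dstar α then h.choose else fun _ => 0 :=
  WellFounded.fix_eq _ _ _

theorem seqF_spec {Y : Type u} {δ : Y → Ordinal.{u}} {Dstar : Filter Y} {α : Ordinal.{u}}
    (h : Good Y δ Dstar α) :
    (∀ s, seqF Y δ Dstar α s < δ s) ∧
      ∀ β : Ordinal.{u}, β < α → {s | seqF Y δ Dstar β s < seqF Y δ Dstar α s} ∈ Dstar := by
  rw [seqF_eq, dif_pos h]
  exact ⟨h.choose_spec.1, fun β hβ => h.choose_spec.2 β hβ⟩

/-- Under the hypotheses: `D*` is a proper σ-complete filter whose dual ideal contains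
`cf-id_{<θ}(δ̄)`, `hrtg (P Y) ≤ θ`, minimal upper bounds exist for bounded increasing
sequences mod any σ-complete extension of `D*`, and `(Π δ̄, <_{D*})` has a well-orderable
cofinal subset `F` — there is a `<_{D*}`-increasing sequence `⟨f α : α < α*⟩` in `Π δ̄`
with no `<_{D*}`-upper bound in `Π δ̄`, and `cf(α*) ≥ θ`. -/
theorem stmt_19 (Y : Type u) (δ : Y → Ordinal.{u}) (hδ : ∀ s, Order.IsSuccLimit (δ s))
    (Dstar : Filter Y) [CountableInterFilter Dstar] [Dstar.NeBot]
    (θ : Cardinal.{u}) (hθ : ℵ₀ ≤ θ)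
    (hθid : ∀ X ∈ cfId Y δ θ, Xᶜ ∈ Dstar)
    (hhrtg : hrtg (Set Y) ≤ θ.ord)
    (heub : ∀ D' : Filter Y, Dstar ≤ D' → CountableInterFilter D' → D'.NeBot →
      ∀ (β : Ordinal.{u}) (g : Ordinal.{u} → Y → Ordinal.{u}),
        (∀ γ < β, ∀ s, g γ s < δ s) →
        (∀ γ γ' : Ordinal.{u}, γ ≤ γ' → γ' < β → {s | g γ s ≤ g γ' s} ∈ D') →
        (∃ b : Y → Ordinal.{u}, (∀ s, b s < δ s) ∧ ∀ γ < β, {s | g γ s ≤ b s} ∈ D') →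
        ∃ fb : Y → Ordinal.{u}, (∀ s, fb s < δ s) ∧
          (∀ γ < β, {s | g γ s ≤ fb s} ∈ D') ∧
          ¬ ∃ h : Y → Ordinal.{u},
            (∀ γ < β, {s | g γ s ≤ h s} ∈ D') ∧ {s | h s < fb s} ∈ D')
    (F : Set (Y → Ordinal.{u}))
    (hF1 : ∀ h ∈ F, ∀ s, h s < δ s)
    (hF2 : ∀ g : Y → Ordinal.{u}, (∀ s, g s < δ s) →
      ∃ h ∈ F, {s | g s ≤ h s} ∈ Dstar)
    (hFwo : ∃ r : ↥F → ↥F → Prop, IsWellOrder ↥F r) :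
    ∃ (αstar : Ordinal.{u}) (f : Ordinal.{u} → Y → Ordinal.{u}),
      (∀ α < αstar, ∀ s, f α s < δ s) ∧
      (∀ α β : Ordinal.{u}, α < β → β < αstar → {s | f α s < f β s} ∈ Dstar) ∧
      (¬ ∃ g : Y → Ordinal.{u}, (∀ s, g s < δ s) ∧
        ∀ α < αstar, {s | f α s < g s} ∈ Dstar) ∧
      θ ≤ Ordinal.cof αstar := by
  classical
  set f : Ordinal.{u} → Y → Ordinal.{u} := seqF Y δ Dstar with hf
  -- Step 1: the recursion halts.
  have hhalt : ∃ α, ¬ Good Y δ Dstar α := by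
    by_contra hall
    push_neg at hall
    have hmem : ∀ α s, f α s < δ s := fun α s => (seqF_spec (hall α)).1 s
    have hinc : ∀ β α : Ordinal.{u}, β < α → {s | f β s < f α s} ∈ Dstar :=
      fun β α hβα => (seqF_spec (hall α)).2 β hβα
    have hne : ∀ β α : Ordinal.{u}, β < α → f β ≠ f α := by
      intro β α hβα heq
      obtain ⟨s, hs⟩ := Filter.nonempty_of_mem (hinc β α hβα)
      simp only [Set.mem_setOf_eq] at hs
      rw [heq] at hs
      exact lt_irrefl _ hs
    have hinj : Function.Injective f := by
      intro α α' h
      rcases lt_trichotomy α α' with h1 | h1 | h1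
      · exact absurd h (hne _ _ h1)
      · exact h1
      · exact absurd h.symm (hne _ _ h1)
    set T := ∀ s : Y, (δ s).ToType with hT
    set J : Ordinal.{u} → ULift.{u + 1} T := fun α =>
      ⟨fun s => (Ordinal.ToType.mk (o := δ s)) ⟨f α s, hmem α s⟩⟩ with hJ
    have hJinj : Function.Injective J := by
      intro α α' h
      apply hinj
      funext s
      have := congrFun (congrArg ULift.down h) s
      have := (Ordinal.ToType.mk (o := δ s)).injective this
      exact congrArg Subtype.val this
    have h1 : #(Ordinal.{u}) ≤ #(ULift.{u + 1} T) := Cardinal.mk_le_of_injective hJinj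
    rw [Cardinal.mk_uLift, ← Cardinal.univ_id] at h1
    exact absurd h1 (Cardinal.lift_lt_univ _).not_ge
  -- Step 2: the halting point.
  set αstar := sInf {α | ¬ Good Y δ Dstar α} with hαstar
  have hnotGood : ¬ Good Y δ Dstar αstar := csInf_mem hhalt
  have hGoodlt : ∀ β < αstar, Good Y δ Dstar β := by
    intro β hβ
    by_contra hb
    exact absurd (csInf_le (OrderBot.bddBelow _)
      (show β ∈ {α | ¬ Good Y δ Dstar α} from hb)) hβ.not_ge
  have hmem : ∀ β < αstar, ∀ s, f β s < δ s := fun β hβ s => (seqF_spec (hGoodlt β hβ)).1 s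
  have hinc : ∀ β α : Ordinal.{u}, β < α → α < αstar → {s | f β s < f α s} ∈ Dstar :=
    fun β α hβα hα => (seqF_spec (hGoodlt α hα)).2 β hβα
  -- Step 3: αstar is not 0 and not a successor.
  have hG0 : Good Y δ Dstar 0 :=
    ⟨fun _ => 0, fun s => (hδ s).pos, fun β hβ => absurd hβ (not_lt_zero (a := β))⟩
  have hpos : 0 < αstar := by
    rcases eq_or_lt_of_le (zero_le (a := αstar)) with h | h
    · exact absurd (h ▸ hG0) hnotGood
    · exact h
  have hlim : Order.IsSuccLimit αstar := by
    rcases Ordinal.zero_or_succ_or_isSuccLimit αstar with h | ⟨σ, hσ⟩ | h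
    · exact absurd h hpos.ne'
    · exfalso
      have hσlt : σ < αstar := hσ ▸ Order.lt_succ σ
      have hσmem := hmem σ hσlt
      refine hnotGood ⟨fun s => f σ s + 1, fun s => ?_, fun β hβ => ?_⟩
      · show f σ s + 1 < δ s
        rw [Ordinal.add_one_eq_succ]
        exact (hδ s).succ_lt (hσmem s)
      · rw [← hσ, Order.lt_succ_iff] at hβ
        have hlt : ∀ s, f σ s < f σ s + 1 := fun s => by
          rw [Ordinal.add_one_eq_succ]; exact Order.lt_succ _
        rcases eq_or_lt_of_le hβ with rfl | hβσ
        · exact Filter.univ_mem' fun s => hlt s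
        · refine Filter.mem_of_superset (hinc β σ hβσ hσlt) fun s hs => ?_
          simp only [Set.mem_setOf_eq] at hs ⊢
          exact lt_trans hs (hlt s)
    · exact h
  -- Step 4: cofinality.
  have hcof : θ ≤ Ordinal.cof αstar := by
    by_contra hc
    push_neg at hc
    obtain ⟨ι, fι, hlsub, hcard⟩ := Ordinal.exists_lsub_cof αstar
    have hιlt : ∀ i, fι i < αstar := fun i => hlsub ▸ Ordinal.lt_lsub fι i
    have hcofinal : ∀ a < αstar, ∃ i, a ≤ fι i := by
      intro a ha
      rw [← hlsub, Ordinal.lt_lsub_iff] at ha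
      exact ha
    have hιne : Nonempty ι := by
      by_contra h
      rw [not_nonempty_iff] at h
      rw [(Ordinal.lsub_eq_zero_iff fι).2 h] at hlsub
      exact hpos.ne' hlsub.symm
    set sup0 : Y → Ordinal.{u} := fun s => ⨆ i, f (fι i) s with hsup0
    have hle_sup : ∀ (i) (s), f (fι i) s ≤ sup0 s := fun i s => Ordinal.le_iSup _ i
    have hsup_le : ∀ s, sup0 s ≤ δ s := fun s =>
      Ordinal.iSup_le_iff.2 fun i => (hmem (fι i) (hιlt i) s).le
    set X : Set Y := {s | δ s ≤ sup0 s} with hX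
    have hXmem : X ∈ cfId Y δ θ := by
      refine ⟨fun s => Set.range fun i => f (fι i) s, fun s hs => ⟨?_, ?_, ?_⟩⟩
      · rintro _ ⟨i, rfl⟩
        exact hmem (fι i) (hιlt i) s
      · intro b hb
        have hb' : b < sup0 s := hb.trans_le hs
        rw [hsup0, Ordinal.lt_iSup_iff] at hb'
        obtain ⟨i, hi⟩ := hb'
        exact ⟨f (fι i) s, Set.mem_range_self i, hi.le⟩
      · have h1 : (otp (Set.range fun i => f (fι i) s)).card
            = #(Set.range fun i => f (fι i) s) := Ordinal.card_type _
        have h2 : #(Set.range fun i => f (fι i) s) ≤ Cardinal.lift.{u + 1} #ι := by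
          have := Cardinal.mk_range_le_lift (f := fun i => f (fι i) s)
          rwa [Cardinal.lift_id'.{u, u + 1}] at this
        rw [Cardinal.lift_ord]
        apply Cardinal.lt_ord.2
        rw [h1]
        exact h2.trans_lt (Cardinal.lift_lt.2 (hcard ▸ hc))
    have hXc : Xᶜ ∈ Dstar := hθid X hXmem
    refine hnotGood ⟨fun s => if δ s ≤ sup0 s then 0 else sup0 s, fun s => ?_, fun β hβ => ?_⟩
    · show (if δ s ≤ sup0 s then 0 else sup0 s) < δ s
      by_cases h : δ s ≤ sup0 s
      · rw [if_pos h]; exact (hδ s).pos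
      · rw [if_neg h]; exact lt_of_not_ge h
    · obtain ⟨i, hi⟩ := hcofinal (β + 1) ((Ordinal.add_one_eq_succ β) ▸ hlim.succ_lt hβ)
      have hβi : β < fι i := by
        rw [Ordinal.add_one_eq_succ, Order.succ_le_iff] at hi
        exact hi
      refine Filter.mem_of_superset
        (Filter.inter_mem (hinc β (fι i) hβi (hιlt i)) hXc) ?_
      rintro s ⟨hs1, hs2⟩
      have hs2' : ¬ δ s ≤ sup0 s := hs2
      simp only [Set.mem_setOf_eq, if_neg hs2']
      exact lt_of_lt_of_le hs1 (hle_sup i s)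
  exact ⟨αstar, f, hmem, fun α β hαβ hβ => hinc α β hαβ hβ, hnotGood, hcof⟩
end
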